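/- Let n ≥ 3 and t be integers with n > t and 5t ≥ 4n − 2, and let k₊ = k₋ = k ≥ 2 be an integer. Then there is no set T ⊆ ℤⁿ such that the error-ball B(n,t,k,k) tiles ℤⁿ by T. -/

import Mathlib

open Finset

/-- Hamming weight of an integer vector: the number of nonzero entries. -/
def wt {n : ℕ} (x : Fin n → ℤ) : ℕ := (Finset.univ.filter (fun i => x i ≠ 0)).card

/-- The `(n,t,k₊,k₋)`-error-ball in `ℤⁿ`. -/
def errBall (n t : ℕ) (kp km : ℤ) : Set (Fin n → ℤ) :=
  {x | (∀ i, -km ≤ x i ∧ x i ≤ kp) ∧ wt x ≤ t}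

/-- `Tiles B T` : every `z ∈ ℤⁿ` is uniquely `z = v + b` with `v ∈ T` and `b ∈ B`. -/
def Tiles {n : ℕ} (B T : Set (Fin n → ℤ)) : Prop :=
  ∀ z : Fin n → ℤ, ∃! p : (Fin n → ℤ) × (Fin n → ℤ),
    p.1 ∈ T ∧ p.2 ∈ B ∧ z = p.1 + p.2

/-- A translate of a tiling is a tiling. -/
lemma tiles_shift {n : ℕ} {B T : Set (Fin n → ℤ)} (hT : Tiles B T) (c : Fin n → ℤ) :
    Tiles B ((fun x => x - c) '' T) := by
  intro z
  obtain ⟨⟨p1, p2⟩, ⟨h1, h2, h3⟩, hu⟩ := hT (z + c)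
  refine ⟨(p1 - c, p2), ⟨⟨p1, h1, rfl⟩, h2, ?_⟩, ?_⟩
  · funext i
    have := congrFun h3 i
    simp only [Pi.add_apply, Pi.sub_apply] at this ⊢
    omega
  · rintro ⟨q1, q2⟩ ⟨⟨a, haT, rfl⟩, hq2, hq3⟩
    have hz : z + c = a + q2 := by
      funext i
      have := congrFun hq3 i
      simp only [Pi.add_apply, Pi.sub_apply] at this ⊢
      omega
    have heq := hu (a, q2) ⟨haT, hq2, hz⟩
    rw [Prod.ext_iff] at heq
    obtain ⟨ha, hb⟩ := heq
    simp only at ha hb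
    rw [ha, hb]

/-- Packing lemma: two distinct translates in a tiling that are within `2k` of each other
in every coordinate cannot have too many "close" coordinates. -/
lemma no_overlap {n t : ℕ} {k : ℤ} (hk : 0 ≤ k) (htn : t ≤ n)
    {T : Set (Fin n → ℤ)} (hT : Tiles (errBall n t k k) T)
    {u v : Fin n → ℤ} (hu : u ∈ T) (hv : v ∈ T) (huv : u ≠ v)
    (hd : ∀ i, -(2 * k) ≤ u i - v i ∧ u i - v i ≤ 2 * k)
    (hc : 2 * (n - t) ≤ (univ.filter (fun i => |u i - v i| ≤ k)).card
        + (univ.filter (fun i => u i = v i)).card) : False := by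
  classical
  set L := univ.filter (fun i => |u i - v i| ≤ k) with hLdef
  set Z := univ.filter (fun i => u i = v i) with hZdef
  have hZL : Z ⊆ L := by
    intro i hi
    simp only [hZdef, mem_filter, mem_univ, true_and] at hi
    simp only [hLdef, mem_filter, mem_univ, true_and, hi, sub_self, abs_zero]
    exact hk
  have hLk : ∀ i ∈ L, -k ≤ u i - v i ∧ u i - v i ≤ k := by
    intro i hi
    simp only [hLdef, mem_filter, mem_univ, true_and, abs_le] at hi
    exact hi
  have hDcard : (L \ Z).card = L.card - Z.card := card_sdiff_of_subset hZL
  have hZLcard : Z.card ≤ L.card := card_le_card hZL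
  have hr1 : (n - t) - Z.card ≤ (L \ Z).card := by omega
  obtain ⟨P, hPss, hPcard⟩ := Finset.exists_subset_card_eq (s := L \ Z) (n := (n - t) - Z.card) hr1
  have hr2 : (n - t) - Z.card ≤ ((L \ Z) \ P).card := by
    rw [card_sdiff_of_subset hPss]; omega
  obtain ⟨P', hP'ss, hP'card⟩ :=
    Finset.exists_subset_card_eq (s := (L \ Z) \ P) (n := (n - t) - Z.card) hr2
  set S := Z ∪ P with hSdef
  set S' := Z ∪ P' with hS'def
  have hPZ : Disjoint Z P :=
    Disjoint.mono_right hPss (disjoint_sdiff)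
  have hP'Z : Disjoint Z P' :=
    Disjoint.mono_right (hP'ss.trans sdiff_subset) (disjoint_sdiff)
  have hScard : n - t ≤ S.card := by
    rw [hSdef, card_union_of_disjoint hPZ]; omega
  have hS'card : n - t ≤ S'.card := by
    rw [hS'def, card_union_of_disjoint hP'Z]; omega
  have hSL : S ⊆ L := union_subset hZL (hPss.trans sdiff_subset)
  have hS'L : S' ⊆ L := union_subset hZL ((hP'ss.trans sdiff_subset).trans sdiff_subset)
  have hSS' : ∀ i, i ∈ S → i ∈ S' → u i = v i := by
    intro i hiS hiS'
    rcases mem_union.mp hiS with hZ1 | hP1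
    · simp only [hZdef, mem_filter, mem_univ, true_and] at hZ1; exact hZ1
    rcases mem_union.mp hiS' with hZ2 | hP2
    · simp only [hZdef, mem_filter, mem_univ, true_and] at hZ2; exact hZ2
    exfalso
    have := hP'ss hP2
    rw [mem_sdiff] at this
    exact this.2 hP1
  set b : Fin n → ℤ := fun i =>
    if i ∈ S then 0 else if i ∈ S' then u i - v i
    else if 0 ≤ u i - v i then u i - v i - k else -k with hbdef
  have hbB : b ∈ errBall n t k k := by
    constructor
    · intro i
      have hdi := hd i
      simp only [hbdef]
      split_ifs with h1 h2 h3
      · omega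
      · have := hLk i (hS'L h2); omega
      · omega
      · omega
    · show wt b ≤ t
      have hsub : univ.filter (fun i => b i ≠ 0) ⊆ univ \ S := by
        intro i hi
        simp only [mem_filter, mem_univ, true_and] at hi
        simp only [mem_sdiff, mem_univ, true_and]
        intro hiS
        exact hi (by simp only [hbdef, if_pos hiS])
      have hcard := card_le_card hsub
      rw [card_sdiff_of_subset (subset_univ S), card_univ, Fintype.card_fin] at hcard
      unfold wt
      omega
  have hb'B : (fun i => b i - (u i - v i)) ∈ errBall n t k k := by
    constructor
    · intro i
      have hdi := hd i
      simp only [hbdef]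
      split_ifs with h1 h2 h3
      · have := hLk i (hSL h1); omega
      · omega
      · omega
      · omega
    · show wt (fun i => b i - (u i - v i)) ≤ t
      have hsub : univ.filter (fun i => b i - (u i - v i) ≠ 0) ⊆ univ \ S' := by
        intro i hi
        simp only [mem_filter, mem_univ, true_and] at hi
        simp only [mem_sdiff, mem_univ, true_and]
        intro hiS'
        apply hi
        by_cases hiS : i ∈ S
        · have heq := hSS' i hiS hiS'
          simp only [hbdef, if_pos hiS, heq, sub_self, zero_sub, neg_zero]
        · simp only [hbdef, if_neg hiS, if_pos hiS', sub_self]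
      have hcard := card_le_card hsub
      rw [card_sdiff_of_subset (subset_univ S'), card_univ, Fintype.card_fin] at hcard
      show (univ.filter (fun i => b i - (u i - v i) ≠ 0)).card ≤ t
      omega
  obtain ⟨⟨p1, p2⟩, hp, hup⟩ := hT (v + b)
  have e1 := hup (v, b) ⟨hv, hbB, rfl⟩
  have e2 := hup (u, fun i => b i - (u i - v i))
    ⟨hu, hb'B, by funext i; simp only [Pi.add_apply]; ring⟩
  apply huv
  have := e2.trans e1.symm
  exact congrArg Prod.fst this

theorem stmt_6 (n t : ℕ) (k : ℤ) (hn : 3 ≤ n) (htn : t < n) (ht : 4 * n ≤ 5 * t + 2)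
    (hk : 2 ≤ k) :
    ¬ ∃ T : Set (Fin n → ℤ), Tiles (errBall n t k k) T := by
  classical
  rintro ⟨T, hT0⟩
  -- shift so that 0 ∈ T
  obtain ⟨⟨p01, p02⟩, ⟨hp0T, _, _⟩, _⟩ := hT0 0
  set T' := (fun x => x - p01) '' T with hT'def
  have hT : Tiles (errBall n t k k) T' := tiles_shift hT0 p01
  have h0 : (0 : Fin n → ℤ) ∈ T' := ⟨p01, hp0T, by funext i; simp⟩
  -- covering function helpers
  have hcov : ∀ z : Fin n → ℤ, ∃ a ∈ T', z - a ∈ errBall n t k k := by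
    intro z
    obtain ⟨p, ⟨h1, h2, h3⟩, _⟩ := hT z
    refine ⟨p.1, h1, ?_⟩
    rw [h3]
    simpa using h2
  -- the covering translate of (k,k,...,k)
  obtain ⟨u, huT, hub⟩ := hcov (fun _ => k)
  obtain ⟨hubd, hubw⟩ := hub
  have hu0 : ∀ i, 0 ≤ u i ∧ u i ≤ 2 * k := by
    intro i
    have := hubd i
    simp only [Pi.sub_apply] at this
    omega
  have hune : u ≠ 0 := by
    rintro rfl
    have hwtn : wt ((fun _ => k) - (0 : Fin n → ℤ)) = n := by
      unfold wt
      rw [filter_true_of_mem, card_univ, Fintype.card_fin]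
      intro i _
      simp only [Pi.sub_apply, Pi.zero_apply, sub_zero]
      omega
    omega
  -- the auxiliary point w
  set w : Fin n → ℤ := fun i =>
    if k + 1 ≤ u i then u i - k else if u i = k then k - 1 else k with hwdef
  have hwprop : ∀ i, 1 ≤ w i ∧ w i ≤ k ∧ w i ≠ u i ∧ -k ≤ w i - u i ∧ w i - u i ≤ k
      ∧ (k + 1 ≤ u i → w i = u i - k) := by
    intro i
    obtain ⟨h1, h2⟩ := hu0 i
    simp only [hwdef]
    split_ifs with hc1 hc2 <;> omega
  -- the covering translate of w
  obtain ⟨v, hvT, hvb⟩ := hcov w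
  obtain ⟨hvbd, hvbw⟩ := hvb
  have hvbd' : ∀ i, -k ≤ w i - v i ∧ w i - v i ≤ k := by
    intro i
    have := hvbd i
    simp only [Pi.sub_apply] at this
    exact this
  have hvne0 : v ≠ 0 := by
    rintro rfl
    have hwtn : wt (w - (0 : Fin n → ℤ)) = n := by
      unfold wt
      rw [filter_true_of_mem, card_univ, Fintype.card_fin]
      intro i _
      have := (hwprop i).1
      simp only [Pi.sub_apply, Pi.zero_apply, sub_zero]
      omega
    omega
  have hvneu : v ≠ u := by
    rintro rfl
    have hwtn : wt (w - v) = n := by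
      unfold wt
      rw [filter_true_of_mem, card_univ, Fintype.card_fin]
      intro i _
      have h3 := (hwprop i).2.2.1
      simp only [Pi.sub_apply]
      intro hcon
      exact h3 (by omega)
    omega
  -- three packing bounds
  have hpack1 : (univ.filter (fun i => |u i| ≤ k)).card
      + (univ.filter (fun i => u i = 0)).card < 2 * (n - t) := by
    by_contra hcon
    push_neg at hcon
    refine no_overlap (by omega) (le_of_lt htn) hT huT h0 hune ?_ ?_
    · intro i
      have := hu0 i
      simp only [Pi.zero_apply, sub_zero]
      omega
    · simpa using hcon
  have hpack2 : (univ.filter (fun i => |v i| ≤ k)).card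
      + (univ.filter (fun i => v i = 0)).card < 2 * (n - t) := by
    by_contra hcon
    push_neg at hcon
    refine no_overlap (by omega) (le_of_lt htn) hT hvT h0 hvne0 ?_ ?_
    · intro i
      have h1 := hvbd' i
      have h2 := hwprop i
      simp only [Pi.zero_apply, sub_zero]
      omega
    · simpa using hcon
  have hpack3 : (univ.filter (fun i => |u i - v i| ≤ k)).card
      + (univ.filter (fun i => u i = v i)).card < 2 * (n - t) := by
    by_contra hcon
    push_neg at hcon
    refine no_overlap (by omega) (le_of_lt htn) hT huT hvT (by exact fun h => hvneu h.symm) ?_ hcon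
    intro i
    have h1 := hvbd' i
    have h2 := (hwprop i).2.2.2.1
    have h3 := (hwprop i).2.2.2.2.1
    omega
  -- the per-coordinate counting inequality
  have hkey : ∀ i, 1 + (if w i - v i = 0 then 1 else 0) ≤
      (if |u i| ≤ k then 1 else 0) +
      ((if |v i| ≤ k then 1 else 0) + (if |u i - v i| ≤ k then 1 else 0)) := by
    intro i
    obtain ⟨ha1, ha2⟩ := hu0 i
    obtain ⟨hb1, hb2, hb3, hb4, hb5, hb6⟩ := hwprop i
    obtain ⟨hc1, hc2⟩ := hvbd' i
    rcases le_or_gt (k + 1) (u i) with hcase | hcase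
    · have hweq := hb6 hcase
      simp only [abs_le]
      split_ifs <;> omega
    · simp only [abs_le]
      split_ifs <;> omega
  -- number of agreement coordinates of v with w
  have hM : n - t ≤ (univ.filter (fun i => w i - v i = 0)).card := by
    have hsplit := Finset.card_filter_add_card_filter_not
      (s := (univ : Finset (Fin n))) (p := fun i => w i - v i = 0)
    have hwt : wt (w - v) = (univ.filter (fun i => ¬ (w i - v i = 0))).card := by
      unfold wt
      congr 1
    rw [card_univ, Fintype.card_fin] at hsplit
    omega
  -- sum it all up
  have hsum : n + (n - t) ≤
      (univ.filter (fun i => |u i| ≤ k)).card +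
      ((univ.filter (fun i => |v i| ≤ k)).card +
       (univ.filter (fun i => |u i - v i| ≤ k)).card) := by
    calc n + (n - t) ≤ n + (univ.filter (fun i => w i - v i = 0)).card := by omega
    _ = ∑ i : Fin n, (1 + if w i - v i = 0 then 1 else 0) := by
        rw [Finset.sum_add_distrib, Finset.sum_const, card_univ, Fintype.card_fin,
          smul_eq_mul, mul_one, Finset.card_filter]
    _ ≤ ∑ i : Fin n, ((if |u i| ≤ k then 1 else 0) +
        ((if |v i| ≤ k then 1 else 0) + (if |u i - v i| ≤ k then 1 else 0))) :=
        Finset.sum_le_sum (fun i _ => hkey i)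
    _ = _ := by
        simp only [Finset.sum_add_distrib, ← Finset.card_filter]
  omega
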